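/- Let Λ, β, α, μ₁, μ₂, d₁, d₂ > 0, S₀ = Λ/μ₁, c > 0, and θ ∈ ℝ with sin θ > 0 and cos θ > 0. Suppose S, I : ℝ → ℝ are differentiable, 0 < S(ξ) ≤ S₀ and I(ξ) > 0 for all ξ, and (S, I) solves the traveling-wave system cS'(ξ) = d₁𝔍[S](ξ) + Λ − βS(ξ)I(ξ)/(1 + αI(ξ)) − μ₁S(ξ), cI'(ξ) = d₂𝔍[I](ξ) + βS(ξ)I(ξ)/(1 + αI(ξ)) − μ₂I(ξ) for all ξ ∈ ℝ. Then there exists a constant C > 0 such that for all ξ ∈ ℝ: I(ξ + sin θ)/I(ξ) ≤ C, I(ξ − sin θ)/I(ξ) ≤ C, I(ξ + cos θ)/I(ξ) ≤ C, I(ξ − cos θ)/I(ξ) ≤ C, and |I'(ξ)|/I(ξ) ≤ C. -/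

import Mathlib

/-- Discrete Laplacian in direction `θ`. -/
noncomputable def lap (θ : ℝ) (φ : ℝ → ℝ) (ξ : ℝ) : ℝ :=
  φ (ξ + Real.sin θ) + φ (ξ - Real.sin θ) + φ (ξ + Real.cos θ) + φ (ξ - Real.cos θ) - 4 * φ ξ

set_option maxHeartbeats 1000000 in
theorem stmt_14 (Λ β α μ₁ μ₂ d₁ d₂ θ c : ℝ)
    (hΛ : 0 < Λ) (hβ : 0 < β) (hα : 0 < α) (hμ₁ : 0 < μ₁) (hμ₂ : 0 < μ₂)
    (hd₁ : 0 < d₁) (hd₂ : 0 < d₂) (hc : 0 < c)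
    (S₀ : ℝ) (hS₀ : S₀ = Λ / μ₁)
    (hsin : 0 < Real.sin θ) (hcos : 0 < Real.cos θ)
    (S I : ℝ → ℝ)
    (hSdiff : Differentiable ℝ S) (hIdiff : Differentiable ℝ I)
    (hSpos : ∀ ξ : ℝ, 0 < S ξ) (hSbd : ∀ ξ : ℝ, S ξ ≤ S₀)
    (hIpos : ∀ ξ : ℝ, 0 < I ξ)
    (hSeq : ∀ ξ : ℝ, c * deriv S ξ =
      d₁ * lap θ S ξ + Λ - β * S ξ * I ξ / (1 + α * I ξ) - μ₁ * S ξ)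
    (hIeq : ∀ ξ : ℝ, c * deriv I ξ =
      d₂ * lap θ I ξ + β * S ξ * I ξ / (1 + α * I ξ) - μ₂ * I ξ) :
    ∃ C : ℝ, 0 < C ∧ ∀ ξ : ℝ,
      I (ξ + Real.sin θ) / I ξ ≤ C ∧ I (ξ - Real.sin θ) / I ξ ≤ C ∧
      I (ξ + Real.cos θ) / I ξ ≤ C ∧ I (ξ - Real.cos θ) / I ξ ≤ C ∧
      |deriv I ξ| / I ξ ≤ C := by
  set s1 := Real.sin θ with hs1
  set s2 := Real.cos θ with hs2
  set B : ℝ := 4 * d₂ + μ₂ with hB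
  have hBpos : 0 < B := by positivity
  set K : ℝ := B / c with hK
  have hKpos : 0 < K := div_pos hBpos hc
  have hS₀pos : 0 < S₀ := hS₀ ▸ div_pos hΛ hμ₁
  have hden : ∀ t : ℝ, 0 < 1 + α * I t := fun t => by nlinarith [hIpos t]
  have hNnonneg : ∀ t : ℝ, 0 ≤ β * S t * I t / (1 + α * I t) := fun t =>
    div_nonneg (mul_nonneg (mul_nonneg hβ.le (hSpos t).le) (hIpos t).le) (hden t).le
  have hNle : ∀ t : ℝ, β * S t * I t / (1 + α * I t) ≤ β * S₀ * I t := by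
    intro t
    rw [div_le_iff₀ (hden t)]
    have q1 : β * S t * I t ≤ β * S₀ * I t := by
      nlinarith [mul_nonneg (mul_nonneg hβ.le (hIpos t).le) (sub_nonneg.mpr (hSbd t))]
    have q2 : β * S₀ * I t ≤ β * S₀ * I t * (1 + α * I t) := by
      nlinarith [mul_nonneg (mul_pos (mul_pos hβ hS₀pos) (hIpos t)).le (mul_pos hα (hIpos t)).le]
    linarith
  have hIcont : Continuous I := hIdiff.continuous
  have hScont : Continuous S := hSdiff.continuous
  have hlapcont : Continuous (lap θ I) := by
    unfold lap
    exact ((((hIcont.comp (continuous_add_right _)).add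
      (hIcont.comp (continuous_sub_right _))).add
      (hIcont.comp (continuous_add_right _))).add
      (hIcont.comp (continuous_sub_right _))).sub (continuous_const.mul hIcont)
  have hI'form : deriv I = fun t =>
      (d₂ * lap θ I t + β * S t * I t / (1 + α * I t) - μ₂ * I t) / c := by
    funext t
    have h := hIeq t
    field_simp
    rw [mul_comm (I t) α]
    linarith [h]
  have hI'cont : Continuous (deriv I) := by
    rw [hI'form]
    exact (((continuous_const.mul hlapcont).add
      (((continuous_const.mul hScont).mul hIcont).div
        (continuous_const.add (continuous_const.mul hIcont)) (fun t => (hden t).ne'))).sub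
      (continuous_const.mul hIcont)).div_const c
  -- master inequality
  have hMaster : ∀ t : ℝ, d₂ * (I (t + s1) + I (t - s1) + I (t + s2) + I (t - s2)) ≤
      c * deriv I t + B * I t := by
    intro t
    have h := hIeq t
    simp only [lap, ← hs1, ← hs2] at h
    rw [hB]
    linarith [hNnonneg t]
  have hLow : ∀ t : ℝ, 0 ≤ c * deriv I t + B * I t := by
    intro t
    refine le_trans ?_ (hMaster t)
    have := hIpos (t + s1); have := hIpos (t - s1); have := hIpos (t + s2); have := hIpos (t - s2)
    nlinarith
  have hSh1 : ∀ t : ℝ, d₂ * I (t + s1) ≤ c * deriv I t + B * I t := by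
    intro t
    refine le_trans ?_ (hMaster t)
    have := hIpos (t - s1); have := hIpos (t + s2); have := hIpos (t - s2)
    nlinarith
  have hSh2 : ∀ t : ℝ, d₂ * I (t + s2) ≤ c * deriv I t + B * I t := by
    intro t
    refine le_trans ?_ (hMaster t)
    have := hIpos (t - s1); have := hIpos (t + s1); have := hIpos (t - s2)
    nlinarith
  -- the weighted function g
  set g : ℝ → ℝ := fun t => Real.exp (K * t) * I t with hgdef
  have hgpos : ∀ t, 0 < g t := fun t => mul_pos (Real.exp_pos _) (hIpos t)
  have hgd : ∀ t : ℝ, HasDerivAt g (Real.exp (K * t) * (K * I t + deriv I t)) t := by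
    intro t
    have h1 : HasDerivAt (fun x : ℝ => Real.exp (K * x)) (Real.exp (K * t) * (K * 1)) t :=
      ((hasDerivAt_id t).const_mul K).exp
    have h2 := h1.mul (hIdiff t).hasDerivAt
    refine h2.congr_deriv ?_
    ring
  have hgderiv : ∀ t, deriv g t = Real.exp (K * t) * (K * I t + deriv I t) :=
    fun t => (hgd t).deriv
  have hg'cont : Continuous (deriv g) := by
    have : deriv g = fun t => Real.exp (K * t) * (K * I t + deriv I t) := funext hgderiv
    rw [this]
    exact (Real.continuous_exp.comp (continuous_const.mul continuous_id)).mul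
      ((continuous_const.mul hIcont).add hI'cont)
  have hgcont : Continuous g :=
    (Real.continuous_exp.comp (continuous_const.mul continuous_id)).mul hIcont
  have hg'nonneg : ∀ t, 0 ≤ deriv g t := by
    intro t
    rw [hgderiv]
    have h1 : 0 ≤ K * I t + deriv I t := by
      have h2 : K * I t + deriv I t = (c * deriv I t + B * I t) / c := by
        rw [hK]; field_simp; ring
      rw [h2]
      exact div_nonneg (hLow t) hc.le
    exact mul_nonneg (Real.exp_pos _).le h1
  have hgmono : Monotone g :=
    monotone_of_deriv_nonneg (fun t => (hgd t).differentiableAt) hg'nonneg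
  -- key integral estimate
  have key : ∀ σ : ℝ, 0 < σ → (∀ t : ℝ, d₂ * I (t + σ) ≤ c * deriv I t + B * I t) →
      ∀ ξ : ℝ, (∫ s in ξ..(ξ + σ), g s) ≤ c / d₂ * Real.exp (K * σ) * g ξ := by
    intro σ hσ hsh ξ
    have hFc : Continuous fun t => d₂ / c * Real.exp (K * t) * I (t + σ) :=
      ((continuous_const.mul (Real.continuous_exp.comp (continuous_const.mul continuous_id))).mul
        (hIcont.comp (continuous_add_right σ)))
    have hftc : (∫ t in (ξ - σ)..ξ, deriv g t) = g ξ - g (ξ - σ) :=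
      intervalIntegral.integral_deriv_eq_sub (fun x _ => (hgd x).differentiableAt)
        (hg'cont.intervalIntegrable _ _)
    have hpt : ∀ t : ℝ, d₂ / c * Real.exp (K * t) * I (t + σ) ≤ deriv g t := by
      intro t
      rw [hgderiv]
      have h2 : (c * deriv I t + B * I t) / c = K * I t + deriv I t := by
        rw [hK]; field_simp; ring
      have h1 : d₂ * I (t + σ) / c ≤ K * I t + deriv I t := by
        rw [← h2]
        exact div_le_div_of_nonneg_right (hsh t) hc.le
      calc d₂ / c * Real.exp (K * t) * I (t + σ)
          = Real.exp (K * t) * (d₂ * I (t + σ) / c) := by ring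
        _ ≤ Real.exp (K * t) * (K * I t + deriv I t) :=
            mul_le_mul_of_nonneg_left h1 (Real.exp_pos _).le
    have hmono : (∫ t in (ξ - σ)..ξ, d₂ / c * Real.exp (K * t) * I (t + σ)) ≤ g ξ - g (ξ - σ) := by
      rw [← hftc]
      exact intervalIntegral.integral_mono_on (by linarith) (hFc.intervalIntegrable _ _)
        (hg'cont.intervalIntegrable _ _) (fun x _ => hpt x)
    have hcov : (∫ t in (ξ - σ)..ξ, d₂ / c * Real.exp (K * t) * I (t + σ))
        = ∫ s in ξ..(ξ + σ), d₂ / c * Real.exp (K * (s - σ)) * I s := by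
      have h := intervalIntegral.integral_comp_add_right (a := ξ - σ) (b := ξ)
        (f := fun s => d₂ / c * Real.exp (K * (s - σ)) * I s) σ
      simp only [add_sub_cancel_right, sub_add_cancel] at h
      exact h
    have hconst : (∫ s in ξ..(ξ + σ), d₂ / c * Real.exp (K * (s - σ)) * I s)
        = (d₂ / c * Real.exp (-(K * σ))) * ∫ s in ξ..(ξ + σ), g s := by
      rw [← intervalIntegral.integral_const_mul]
      apply intervalIntegral.integral_congr
      intro s _
      have he : Real.exp (K * (s - σ)) = Real.exp (-(K * σ)) * Real.exp (K * s) := by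
        rw [← Real.exp_add]; congr 1; ring
      show d₂ / c * Real.exp (K * (s - σ)) * I s
          = d₂ / c * Real.exp (-(K * σ)) * (Real.exp (K * s) * I s)
      rw [he]; ring
    have h6 : d₂ / c * Real.exp (-(K * σ)) * (∫ s in ξ..(ξ + σ), g s) ≤ g ξ := by
      rw [hcov, hconst] at hmono
      linarith [hgpos (ξ - σ)]
    have hapos : (0:ℝ) < d₂ / c * Real.exp (-(K * σ)) :=
      mul_pos (div_pos hd₂ hc) (Real.exp_pos _)
    have h7 : (∫ s in ξ..(ξ + σ), g s) ≤ g ξ / (d₂ / c * Real.exp (-(K * σ))) :=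
      (le_div_iff₀' hapos).mpr h6
    have h8 : g ξ / (d₂ / c * Real.exp (-(K * σ))) = c / d₂ * Real.exp (K * σ) * g ξ := by
      rw [Real.exp_neg]
      field_simp
    linarith [h8 ▸ h7]
  -- half-step then full-step upper bound
  have half : ∀ σ A : ℝ, 0 < σ → 0 < A →
      (∀ ξ : ℝ, (∫ s in ξ..(ξ + σ), g s) ≤ A * g ξ) →
      ∀ ξ : ℝ, g (ξ + σ) ≤ (2 * A / σ) ^ 2 * g ξ := by
    intro σ A hσ hA hint ξ
    have hstep : ∀ η : ℝ, g (η + σ / 2) ≤ 2 * A / σ * g η := by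
      intro η
      have h1 : σ / 2 * g (η + σ / 2) ≤ ∫ s in (η + σ / 2)..(η + σ), g s := by
        have hcst : (∫ _t in (η + σ / 2)..(η + σ), g (η + σ / 2)) = σ / 2 * g (η + σ / 2) := by
          rw [intervalIntegral.integral_const, smul_eq_mul]
          congr 1
          ring
        rw [← hcst]
        exact intervalIntegral.integral_mono_on (by linarith) intervalIntegrable_const
          (hgcont.intervalIntegrable _ _) (fun x hx => hgmono hx.1)
      have h2 : (∫ s in (η + σ / 2)..(η + σ), g s) ≤ ∫ s in η..(η + σ), g s := by
        have hadd := intervalIntegral.integral_add_adjacent_intervals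
          (μ := MeasureTheory.volume) (a := η) (b := η + σ / 2) (c := η + σ)
          (hgcont.intervalIntegrable _ _) (hgcont.intervalIntegrable _ _)
        have hnn : 0 ≤ ∫ s in η..(η + σ / 2), g s :=
          intervalIntegral.integral_nonneg (by linarith) (fun x _ => (hgpos x).le)
        linarith
      have h3 := hint η
      have h4 : σ / 2 * g (η + σ / 2) ≤ A * g η := by linarith
      rw [div_mul_eq_mul_div, le_div_iff₀ hσ]
      linarith
    have e1 : g (ξ + σ) = g (ξ + σ / 2 + σ / 2) := by norm_num [add_assoc]
    calc g (ξ + σ) = g (ξ + σ / 2 + σ / 2) := e1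
      _ ≤ 2 * A / σ * g (ξ + σ / 2) := hstep _
      _ ≤ 2 * A / σ * (2 * A / σ * g ξ) :=
          mul_le_mul_of_nonneg_left (hstep ξ) (by positivity)
      _ = (2 * A / σ) ^ 2 * g ξ := by ring
  -- transfer g-bounds to I-bounds (forward)
  have forward : ∀ σ D : ℝ, 0 < σ → (∀ ξ : ℝ, g (ξ + σ) ≤ D * g ξ) →
      ∀ ξ : ℝ, I (ξ + σ) ≤ D * I ξ := by
    intro σ D hσ h ξ
    have h1 : Real.exp (K * (ξ + σ)) * I (ξ + σ) ≤ D * (Real.exp (K * ξ) * I ξ) := h ξ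
    have e1 : Real.exp (K * ξ) ≤ Real.exp (K * (ξ + σ)) :=
      Real.exp_le_exp.mpr (by nlinarith)
    have h2 : Real.exp (K * ξ) * I (ξ + σ) ≤ Real.exp (K * ξ) * (D * I ξ) := by
      calc Real.exp (K * ξ) * I (ξ + σ) ≤ Real.exp (K * (ξ + σ)) * I (ξ + σ) :=
            mul_le_mul_of_nonneg_right e1 (hIpos _).le
        _ ≤ D * (Real.exp (K * ξ) * I ξ) := h1
        _ = Real.exp (K * ξ) * (D * I ξ) := by ring
    exact le_of_mul_le_mul_left h2 (Real.exp_pos _)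
  -- backward bounds
  have backward : ∀ σ : ℝ, 0 < σ → ∀ ξ : ℝ, I (ξ - σ) ≤ Real.exp (K * σ) * I ξ := by
    intro σ hσ ξ
    have h1 : g (ξ - σ) ≤ g ξ := hgmono (by linarith)
    have h1' : Real.exp (K * (ξ - σ)) * I (ξ - σ) ≤ Real.exp (K * ξ) * I ξ := h1
    calc I (ξ - σ) = Real.exp (-(K * (ξ - σ))) * (Real.exp (K * (ξ - σ)) * I (ξ - σ)) := by
          rw [← mul_assoc, ← Real.exp_add]; simp
      _ ≤ Real.exp (-(K * (ξ - σ))) * (Real.exp (K * ξ) * I ξ) :=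
          mul_le_mul_of_nonneg_left h1' (Real.exp_pos _).le
      _ = Real.exp (K * σ) * I ξ := by
          rw [← mul_assoc, ← Real.exp_add, show -(K * (ξ - σ)) + K * ξ = K * σ by ring]
  -- assemble the constants
  set A1 : ℝ := c / d₂ * Real.exp (K * s1) with hA1def
  set A2 : ℝ := c / d₂ * Real.exp (K * s2) with hA2def
  have hA1 : 0 < A1 := mul_pos (div_pos hc hd₂) (Real.exp_pos _)
  have hA2 : 0 < A2 := mul_pos (div_pos hc hd₂) (Real.exp_pos _)
  set D1 : ℝ := (2 * A1 / s1) ^ 2 with hD1def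
  set D2 : ℝ := (2 * A2 / s2) ^ 2 with hD2def
  have hD1 : 0 < D1 := pow_pos (div_pos (by linarith) hsin) 2
  have hD2 : 0 < D2 := pow_pos (div_pos (by linarith) hcos) 2
  set E1 : ℝ := Real.exp (K * s1) with hE1def
  set E2 : ℝ := Real.exp (K * s2) with hE2def
  have hE1 : 0 < E1 := Real.exp_pos _
  have hE2 : 0 < E2 := Real.exp_pos _
  have fw1 : ∀ ξ : ℝ, I (ξ + s1) ≤ D1 * I ξ :=
    forward s1 D1 hsin (half s1 A1 hsin hA1 (key s1 hsin hSh1))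
  have fw2 : ∀ ξ : ℝ, I (ξ + s2) ≤ D2 * I ξ :=
    forward s2 D2 hcos (half s2 A2 hcos hA2 (key s2 hcos hSh2))
  have bw1 : ∀ ξ : ℝ, I (ξ - s1) ≤ E1 * I ξ := backward s1 hsin
  have bw2 : ∀ ξ : ℝ, I (ξ - s2) ≤ E2 * I ξ := backward s2 hcos
  -- derivative bound
  set R : ℝ := d₂ * (D1 + D2 + E1 + E2) + β * S₀ with hRdef
  have hRpos : 0 < R := by positivity
  have hub : ∀ ξ : ℝ, c * deriv I ξ ≤ R * I ξ := by
    intro ξ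
    have h := hIeq ξ
    simp only [lap, ← hs1, ← hs2] at h
    have b1 := mul_le_mul_of_nonneg_left (fw1 ξ) hd₂.le
    have b2 := mul_le_mul_of_nonneg_left (fw2 ξ) hd₂.le
    have b3 := mul_le_mul_of_nonneg_left (bw1 ξ) hd₂.le
    have b4 := mul_le_mul_of_nonneg_left (bw2 ξ) hd₂.le
    have hn := hNle ξ
    have hp := hIpos ξ
    rw [hRdef]
    linarith [h, b1, b2, b3, b4, hn, (mul_pos hd₂ hp).le, (mul_pos hμ₂ hp).le]
  set C5 : ℝ := (R + B) / c with hC5def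
  have hC5 : 0 < C5 := div_pos (by linarith) hc
  have hderivbd : ∀ ξ : ℝ, |deriv I ξ| ≤ C5 * I ξ := by
    intro ξ
    have hu := hub ξ
    have hl := hLow ξ
    have hp := hIpos ξ
    have habs : |c * deriv I ξ| ≤ (R + B) * I ξ := by
      rw [abs_le]
      constructor
      · nlinarith [mul_pos hRpos hp]
      · nlinarith [mul_pos hBpos hp]
    rw [abs_mul, abs_of_pos hc] at habs
    rw [hC5def, div_mul_eq_mul_div, le_div_iff₀ hc]
    calc |deriv I ξ| * c = c * |deriv I ξ| := by ring
      _ ≤ (R + B) * I ξ := habs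
  -- final constant
  refine ⟨D1 + D2 + E1 + E2 + C5, by positivity, fun ξ => ?_⟩
  have hp := hIpos ξ
  refine ⟨?_, ?_, ?_, ?_, ?_⟩
  · rw [div_le_iff₀ hp]
    nlinarith [fw1 ξ]
  · rw [div_le_iff₀ hp]
    nlinarith [bw1 ξ]
  · rw [div_le_iff₀ hp]
    nlinarith [fw2 ξ]
  · rw [div_le_iff₀ hp]
    nlinarith [bw2 ξ]
  · rw [div_le_iff₀ hp]
    nlinarith [hderivbd ξ, abs_nonneg (deriv I ξ)]
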